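/- arXiv:2204.13466 — 2 statements merged into one kernel-verified Lean document; each statement's English description precedes it below -/
import Mathlib

section
/- For every clustering system 𝒞 on a finite set X there exists a cluster network N on X with 𝒞_N = 𝒞, and N is unique up to a digraph isomorphism fixing every element of X; equivalently, N is the unique semi-regular, separated, phylogenetic network on X with clustering system 𝒞. -/
set_option linter.unusedSectionVars false
set_option linter.unusedVariables false


namespace PhyloNet

/-- A (rooted) network on a set `X` of taxa: a finite directed acyclic graph with a
unique vertex of indegree 0 (the root), whose vertices of outdegree 0 (the leaves)
are exactly the elements of `X` (via the injection `leafEmb`). -/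
structure Network (X : Type) where
  V : Type
  [fintypeV : Fintype V]
  E : V → V → Prop
  leafEmb : X → V
  leafEmb_inj : Function.Injective leafEmb
  acyclic : ∀ u v : V, E u v → ¬ Relation.ReflTransGen E v u
  root_unique : ∃! r : V, ∀ u : V, ¬ E u r
  leaf_iff : ∀ v : V, (∀ w : V, ¬ E v w) ↔ ∃ x : X, leafEmb x = v

attribute [instance] Network.fintypeV

variable {X : Type}

namespace Network

/-- `reach u v` : there is a directed path (possibly trivial) from `u` to `v`,
i.e. `v ⪯ u`. -/
def reach (N : Network X) : N.V → N.V → Prop := Relation.ReflTransGen N.E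

/-- The cluster of a vertex: the set of leaves reachable from it. -/
def cluster (N : Network X) (v : N.V) : Set X := {x | N.reach v (N.leafEmb x)}

/-- The clustering system of a network. -/
def CS (N : Network X) : Set (Set X) := Set.range N.cluster

noncomputable def inDeg (N : Network X) (v : N.V) : ℕ := {u | N.E u v}.ncard
noncomputable def outDeg (N : Network X) (v : N.V) : ℕ := {w | N.E v w}.ncard

def IsHybrid (N : Network X) (v : N.V) : Prop := 1 < N.inDeg v
def IsTreeVertex (N : Network X) (v : N.V) : Prop := N.inDeg v ≤ 1
def IsLeaf (N : Network X) (v : N.V) : Prop := ∀ w : N.V, ¬ N.E v w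

/-- The arc `(u,w)` is a shortcut: `w ≺ v` for some child `v ≠ w` of `u`. -/
def IsShortcut (N : Network X) (u w : N.V) : Prop :=
  N.E u w ∧ ∃ v : N.V, N.E u v ∧ v ≠ w ∧ N.reach v w

def ShortcutFree (N : Network X) : Prop := ∀ u w : N.V, ¬ N.IsShortcut u w

/-- Path-cluster comparability. -/
def PCC (N : Network X) : Prop :=
  ∀ u v : N.V, (N.reach u v ∨ N.reach v u) ↔
    (N.cluster u ⊆ N.cluster v ∨ N.cluster v ⊆ N.cluster u)

def SemiRegular (N : Network X) : Prop := N.ShortcutFree ∧ N.PCC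

/-- `N` is regular iff `v ↦ C(v)` is a digraph isomorphism onto the Hasse diagram
of `𝒞_N` (ordered by inclusion). -/
def Regular (N : Network X) : Prop :=
  Function.Injective N.cluster ∧
  ∀ u v : N.V, N.E u v ↔
    (N.cluster v ⊂ N.cluster u ∧
      ¬ ∃ w : N.V, N.cluster v ⊂ N.cluster w ∧ N.cluster w ⊂ N.cluster u)

def Separated (N : Network X) : Prop := ∀ v : N.V, N.IsHybrid v → N.outDeg v = 1

def Phylogenetic (N : Network X) : Prop := ¬ ∃ v : N.V, N.outDeg v = 1 ∧ N.inDeg v ≤ 1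

def Binary (N : Network X) : Prop :=
  (∀ v : N.V, N.IsTreeVertex v → (N.IsLeaf v ∨ N.outDeg v = 2)) ∧
  (∀ v : N.V, N.IsHybrid v → N.inDeg v = 2 ∧ N.outDeg v = 1)

def TreeChild (N : Network X) : Prop :=
  ∀ v : N.V, ¬ N.IsLeaf v → ∃ u : N.V, N.E v u ∧ N.inDeg u = 1

/-- The underlying undirected (simple) graph of a network. -/
def UG (N : Network X) : SimpleGraph N.V where
  Adj u v := u ≠ v ∧ (N.E u v ∨ N.E v u)
  symm := ⟨fun _ _ h => ⟨Ne.symm h.1, Or.symm h.2⟩⟩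
  loopless := ⟨fun _ h => h.1 rfl⟩

/-- A set of vertices is biconnected if it induces a connected undirected graph
with no cutvertex. -/
def IsBiconn (N : Network X) (B : Set N.V) : Prop :=
  (N.UG.induce B).Connected ∧ ∀ v ∈ B, (N.UG.induce (B \ {v})).Preconnected

/-- A block: a maximal biconnected set of vertices. -/
def IsBlock (N : Network X) (B : Set N.V) : Prop :=
  N.IsBiconn B ∧ ∀ B' : Set N.V, B ⊆ B' → N.IsBiconn B' → B' = B

/-- The set `B` contains an undirected cycle (`B` is a non-trivial block when it is
a block). -/
def HasCycleIn (N : Network X) (B : Set N.V) : Prop :=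
  ∃ (v : N.V) (c : N.UG.Walk v v), c.IsCycle ∧ ∀ w ∈ c.support, w ∈ B

/-- Level-1: each block contains at most one hybrid vertex that is not
`⪯`-maximal in the block. -/
def Level1 (N : Network X) : Prop :=
  ∀ B : Set N.V, N.IsBlock B →
    Set.Subsingleton {v : N.V | v ∈ B ∧ N.IsHybrid v ∧ ∃ u ∈ B, u ≠ v ∧ N.reach u v}

/-- The set `B` (with the edges of the underlying undirected graph between its
members) is exactly an undirected cycle. -/
def IsCycleSet (N : Network X) (B : Set N.V) : Prop :=
  ∃ (v : N.V) (c : N.UG.Walk v v), c.IsCycle ∧ (∀ w : N.V, w ∈ c.support ↔ w ∈ B) ∧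
    ∀ u w : N.V, (N.UG.Adj u w ∧ u ∈ B ∧ w ∈ B) ↔ s(u, w) ∈ c.edges

/-- A galled tree: every non-trivial block is an undirected cycle. -/
def GalledTree (N : Network X) : Prop :=
  ∀ B : Set N.V, N.IsBlock B → N.HasCycleIn B → N.IsCycleSet B

/-- Quasi-binary: hybrid vertices have indegree 2 and outdegree 1, and the
`⪯`-maximal vertex of every non-trivial block has outdegree 2. -/
def QuasiBinary (N : Network X) : Prop :=
  (∀ v : N.V, N.IsHybrid v → N.inDeg v = 2 ∧ N.outDeg v = 1) ∧
  ∀ B : Set N.V, N.IsBlock B → N.HasCycleIn B →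
    ∀ v ∈ B, (∀ u ∈ B, N.reach u v → u = v) → N.outDeg v = 2

/-- `LCA A`: the `⪯`-minimal vertices among the common ancestors of `A`. -/
def LCA (N : Network X) (A : Set X) : Set N.V :=
  {v : N.V | A ⊆ N.cluster v ∧ ∀ u : N.V, A ⊆ N.cluster u → N.reach v u → u = v}

/-- An lca-network: every nonempty set of leaves has a unique least common
ancestor. -/
def LcaNetwork (N : Network X) : Prop :=
  ∀ A : Set X, A.Nonempty → ∃ v : N.V, N.LCA A = {v}

/-- A strong lca-network. -/
def StrongLca (N : Network X) : Prop :=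
  N.LcaNetwork ∧
  ∀ A : Set X, A.Nonempty → ∃ x ∈ A, ∃ y ∈ A, N.LCA ({x, y} : Set X) = N.LCA A

/-- Cluster networks in the sense of Huson & Rupp. -/
def ClusterNetwork (N : Network X) : Prop :=
  N.PCC ∧
  (∀ u v : N.V, N.cluster u = N.cluster v ↔
    (u = v ∨ (N.IsHybrid v ∧ N.E v u) ∨ (N.IsHybrid u ∧ N.E u v))) ∧
  (∀ u v : N.V, N.E v u →
    ¬ ∃ w : N.V, N.cluster u ⊂ N.cluster w ∧ N.cluster w ⊂ N.cluster v) ∧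
  (∀ v : N.V, N.IsHybrid v →
    ∃ u : N.V, N.E v u ∧ (∀ w : N.V, N.E v w → w = u) ∧ N.IsTreeVertex u)

/-- The multiplicity of a cluster in the cluster multiset `𝓜_N`. -/
noncomputable def multiplicity (N : Network X) (C : Set X) : ℕ :=
  Nat.card {v : N.V // N.cluster v = C}

/-- Isomorphism of networks on the same leaf set `X`, fixing every leaf. -/
def Isomorphic (N N' : Network X) : Prop :=
  ∃ φ : N.V ≃ N'.V, (∀ u v : N.V, N.E u v ↔ N'.E (φ u) (φ v)) ∧
    ∀ x : X, φ (N.leafEmb x) = N'.leafEmb x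

end Network

/-- A clustering system on `X`. -/
def IsClusteringSystem {X : Type} (𝒞 : Set (Set X)) : Prop :=
  ∅ ∉ 𝒞 ∧ Set.univ ∈ 𝒞 ∧ ∀ x : X, {x} ∈ 𝒞

/-- Two sets overlap if `A ∩ B ∉ {∅, A, B}`. -/
def Overlap {X : Type} (A B : Set X) : Prop :=
  (A ∩ B).Nonempty ∧ A ∩ B ≠ A ∧ A ∩ B ≠ B

/-- Closed (under pairwise nonempty intersections). -/
def IsClosedCS {X : Type} (𝒞 : Set (Set X)) : Prop :=
  ∀ A ∈ 𝒞, ∀ B ∈ 𝒞, (A ∩ B).Nonempty → A ∩ B ∈ 𝒞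

/-- Property (L). -/
def PropertyL {X : Type} (𝒞 : Set (Set X)) : Prop :=
  ∀ C₁ ∈ 𝒞, ∀ C₂ ∈ 𝒞, ∀ C₃ ∈ 𝒞, Overlap C₁ C₂ → Overlap C₁ C₃ → C₁ ∩ C₂ = C₁ ∩ C₃

/-- Weak hierarchy. -/
def WeakHierarchy {X : Type} (𝒞 : Set (Set X)) : Prop :=
  ∀ C₁ ∈ 𝒞, ∀ C₂ ∈ 𝒞, ∀ C₃ ∈ 𝒞,
    C₁ ∩ C₂ ∩ C₃ = C₁ ∩ C₂ ∨ C₁ ∩ C₂ ∩ C₃ = C₁ ∩ C₃ ∨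
    C₁ ∩ C₂ ∩ C₃ = C₂ ∩ C₃ ∨ C₁ ∩ C₂ ∩ C₃ = ∅

/-- Property (N3O): no three distinct pairwise overlapping clusters. -/
def N3O {X : Type} (𝒞 : Set (Set X)) : Prop :=
  ¬ ∃ C₁ ∈ 𝒞, ∃ C₂ ∈ 𝒞, ∃ C₃ ∈ 𝒞,
    C₁ ≠ C₂ ∧ C₁ ≠ C₃ ∧ C₂ ≠ C₃ ∧ Overlap C₁ C₂ ∧ Overlap C₁ C₃ ∧ Overlap C₂ C₃

/-- Property (2-Inc). -/
def TwoInc {X : Type} (𝒞 : Set (Set X)) : Prop :=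
  ∀ C ∈ 𝒞,
    {A : Set X | A ∈ 𝒞 ∧ A ⊂ C ∧ ∀ B ∈ 𝒞, B ⊂ C → A ⊆ B → A = B}.ncard ≤ 2 ∧
    {A : Set X | A ∈ 𝒞 ∧ C ⊂ A ∧ ∀ B ∈ 𝒞, C ⊂ B → B ⊆ A → A = B}.ncard ≤ 2

/-- The intersection closure: all nonempty intersections of nonempty subfamilies. -/
def interClosure {X : Type} (𝒞 : Set (Set X)) : Set (Set X) :=
  {A : Set X | A.Nonempty ∧ ∃ S : Set (Set X), S ⊆ 𝒞 ∧ S.Nonempty ∧ A = ⋂₀ S}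

-- ===== auxiliary construction =====
section Canon
variable [Fintype X]

def Cov (𝒞 : Set (Set X)) (C D : Set X) : Prop :=
  C ∈ 𝒞 ∧ D ∈ 𝒞 ∧ C ⊂ D ∧ ∀ E ∈ 𝒞, C ⊂ E → E ⊂ D → False

def Hyb (𝒞 : Set (Set X)) (C : Set X) : Prop :=
  ∃ D₁ D₂, Cov 𝒞 C D₁ ∧ Cov 𝒞 C D₂ ∧ D₁ ≠ D₂

def CV (𝒞 : Set (Set X)) : Type _ :=
  {p : Set X × Bool // p.1 ∈ 𝒞 ∧ (p.2 = true → Hyb 𝒞 p.1)}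

instance (𝒞 : Set (Set X)) : Finite (CV 𝒞) := by unfold CV; infer_instance

def CE (𝒞 : Set (Set X)) (u v : CV 𝒞) : Prop :=
  (u.1.1 = v.1.1 ∧ u.1.2 = true ∧ v.1.2 = false) ∨
  (u.1.2 = false ∧ Cov 𝒞 v.1.1 u.1.1 ∧ (v.1.2 = true ↔ Hyb 𝒞 v.1.1))

variable {𝒞 : Set (Set X)}

/-- tree vertex of the construction -/
def tV (C : Set X) (hC : C ∈ 𝒞) : CV 𝒞 := ⟨(C, false), hC, by simp⟩

lemma CV.ext {u v : CV 𝒞} (h1 : u.1.1 = v.1.1) (h2 : u.1.2 = v.1.2) : u = v :=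
  Subtype.ext (Prod.ext h1 h2)

/-- there is a cover above every non-maximum cluster -/
lemma exists_cov_above (h𝒞 : IsClusteringSystem 𝒞) {C : Set X} (hC : C ∈ 𝒞)
    (hne : C ≠ Set.univ) : ∃ D, Cov 𝒞 C D := by
  obtain ⟨D, hD, hmin⟩ := Set.Finite.exists_minimalFor id {F | F ∈ 𝒞 ∧ C ⊂ F}
    (Set.toFinite _) ⟨Set.univ, h𝒞.2.1, (Set.subset_univ C).ssubset_of_ne hne⟩
  exact ⟨D, hC, hD.1, hD.2, fun E hE hCE hED =>
    hED.not_subset (hmin ⟨hE, hCE⟩ hED.le)⟩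

/-- there is a cover below every non-singleton cluster -/
lemma exists_cov_below (h𝒞 : IsClusteringSystem 𝒞) {C : Set X} (hC : C ∈ 𝒞)
    {F : Set X} (hF : F ∈ 𝒞) (hFC : F ⊂ C) : ∃ D, Cov 𝒞 D C ∧ F ⊆ D := by
  obtain ⟨D, hD, hmax⟩ := Set.Finite.exists_maximalFor id {G | G ∈ 𝒞 ∧ F ⊆ G ∧ G ⊂ C}
    (Set.toFinite _) ⟨F, hF, le_refl F, hFC⟩
  refine ⟨D, ⟨hD.1, hC, hD.2.2, fun E hE hDE hEC =>
    hDE.not_subset (hmax ⟨hE, hD.2.1.trans hDE.le, hEC⟩ hDE.le)⟩, hD.2.1⟩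

lemma Cov.ssub {C D : Set X} (h : Cov 𝒞 C D) : C ⊂ D := h.2.2.1

lemma Cov.sandwich {C D F : Set X} (h : Cov 𝒞 C D) (hF : F ∈ 𝒞) (h1 : C ⊂ F)
    (h2 : F ⊆ D) : F = D := by
  by_contra hne
  exact h.2.2.2 F hF h1 (h2.ssubset_of_ne hne)

lemma mem_univ_not_hyb (h𝒞 : IsClusteringSystem 𝒞) : ¬ Hyb 𝒞 (Set.univ : Set X) := by
  rintro ⟨D, _, hD, -, -⟩
  exact (hD.ssub.ne (Set.eq_univ_of_univ_subset hD.ssub.le).symm).elim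

/-- the canonical representative of a cluster, and moves towards it -/
lemma reach_tV_of_cov (h𝒞 : IsClusteringSystem 𝒞) {C D : Set X} (hC : C ∈ 𝒞)
    (hD : D ∈ 𝒞) (hcov : Cov 𝒞 D C) :
    Relation.ReflTransGen (CE 𝒞) (tV C hC) (tV D hD) := by
  by_cases hh : Hyb 𝒞 D
  · have e1 : CE 𝒞 (tV C hC) ⟨(D, true), hD, fun _ => hh⟩ := by
      right; exact ⟨rfl, hcov, ⟨fun _ => hh, fun _ => rfl⟩⟩
    have e2 : CE 𝒞 (⟨(D, true), hD, fun _ => hh⟩ : CV 𝒞) (tV D hD) := by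
      left; exact ⟨rfl, rfl, rfl⟩
    exact (Relation.ReflTransGen.single e1).tail e2
  · exact Relation.ReflTransGen.single
      (Or.inr ⟨rfl, hcov, ⟨fun h => (Bool.false_ne_true h).elim, fun h => (hh h).elim⟩⟩)

lemma reach_down (h𝒞 : IsClusteringSystem 𝒞) :
    ∀ n (C : Set X) (hC : C ∈ 𝒞) (v : CV 𝒞), v.1.1 ⊂ C → C.ncard ≤ n →
      Relation.ReflTransGen (CE 𝒞) (tV C hC) v := by
  intro n
  induction n with
  | zero =>
    intro C hC v hv hcard
    have hC0 : C = ∅ := Set.ncard_eq_zero (Set.toFinite C) |>.mp (Nat.le_zero.mp hcard)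
    rw [hC0] at hv
    exact absurd (Set.subset_empty_iff.mp hv.le) hv.ne
  | succ n ih =>
    intro C hC v hv hcard
    obtain ⟨E', hcov, hDE⟩ := exists_cov_below h𝒞 hC v.2.1 hv
    by_cases hED : E' = v.1.1
    · subst hED
      by_cases hb : v.1.2 = true
      · refine Relation.ReflTransGen.single (Or.inr ⟨rfl, hcov, ?_⟩)
        simp only [hb, true_iff]
        exact v.2.2 hb
      · have : v = tV v.1.1 v.2.1 := CV.ext rfl (by simp at hb; exact hb)
        rw [this]
        exact reach_tV_of_cov h𝒞 hC v.2.1 hcov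
    · have hE𝒞 : E' ∈ 𝒞 := hcov.1
      have h1 : Relation.ReflTransGen (CE 𝒞) (tV C hC) (tV E' hE𝒞) :=
        reach_tV_of_cov h𝒞 hC hE𝒞 hcov
      have h2 : v.1.1 ⊂ E' := hDE.ssubset_of_ne (Ne.symm hED)
      have h3 : E'.ncard ≤ n := by
        have := Set.ncard_lt_ncard hcov.ssub (Set.toFinite C)
        omega
      exact h1.trans (ih E' hE𝒞 v h2 h3)

def Below (u v : CV 𝒞) : Prop :=
  u = v ∨ v.1.1 ⊂ u.1.1 ∨ (v.1.1 = u.1.1 ∧ u.1.2 = true ∧ v.1.2 = false)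

lemma reach_iff (h𝒞 : IsClusteringSystem 𝒞) (u v : CV 𝒞) :
    Relation.ReflTransGen (CE 𝒞) u v ↔ Below u v := by
  constructor
  · intro h
    induction h with
    | refl => exact Or.inl rfl
    | tail hub hbc ih =>
      rename_i b c
      rcases hbc with ⟨hC, hbt, hcf⟩ | ⟨hbf, hcov, _⟩
      · rcases ih with rfl | hlt | ⟨hEq, hut, hbf⟩
        · exact Or.inr (Or.inr ⟨hC.symm, hbt, hcf⟩)
        · exact Or.inr (Or.inl (hC ▸ hlt))
        · rw [hbf] at hbt; exact absurd hbt (by simp)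
      · have hcb : c.1.1 ⊂ b.1.1 := hcov.ssub
        rcases ih with rfl | hlt | ⟨hEq, _, _⟩
        · exact Or.inr (Or.inl hcb)
        · exact Or.inr (Or.inl (hcb.trans hlt))
        · exact Or.inr (Or.inl (hEq ▸ hcb))
  · rintro (rfl | hlt | ⟨hEq, hut, hvf⟩)
    · exact Relation.ReflTransGen.refl
    · have step1 : Relation.ReflTransGen (CE 𝒞) u (tV u.1.1 u.2.1) := by
        by_cases hb : u.1.2 = true
        · exact Relation.ReflTransGen.single (Or.inl ⟨rfl, hb, rfl⟩)
        · have : u = tV u.1.1 u.2.1 := CV.ext rfl (by simp at hb; exact hb)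
          rw [← this]
      exact step1.trans (reach_down h𝒞 u.1.1.ncard u.1.1 u.2.1 v hlt le_rfl)
    · exact Relation.ReflTransGen.single (Or.inl ⟨hEq.symm, hut, hvf⟩)

-- measure for acyclicity
noncomputable def mu (v : CV 𝒞) : ℕ := 2 * v.1.1.ncard + (if v.1.2 = true then 1 else 0)

lemma mu_lt {u v : CV 𝒞} (h : CE 𝒞 u v) : mu v < mu u := by
  rcases h with ⟨hC, hut, hvf⟩ | ⟨huf, hcov, _⟩
  · simp [mu, hC, hut, hvf]
  · have h1 : v.1.1.ncard < u.1.1.ncard := Set.ncard_lt_ncard hcov.ssub (Set.toFinite _)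
    simp only [mu, huf]
    split <;> omega

lemma CE_acyclic (u v : CV 𝒞) (h : CE 𝒞 u v) :
    ¬ Relation.ReflTransGen (CE 𝒞) v u := by
  intro hr
  have hle : mu u ≤ mu v := by
    clear h
    induction hr with
    | refl => exact le_rfl
    | tail _ h ih => exact le_trans (mu_lt h).le ih
  exact absurd (mu_lt h) (not_lt.mpr hle)

noncomputable def canonN (𝒞 : Set (Set X)) (h𝒞 : IsClusteringSystem 𝒞) : Network X where
  V := CV 𝒞
  fintypeV := Fintype.ofFinite _
  E := CE 𝒞
  leafEmb x := ⟨({x}, false), h𝒞.2.2 x, by simp⟩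
  leafEmb_inj := by
    intro x y h
    have : ({x} : Set X) = {y} := congrArg (fun v : CV 𝒞 => v.1.1) h
    simpa [Set.singleton_eq_singleton_iff] using this
  acyclic := CE_acyclic
  root_unique := by
    refine ⟨tV Set.univ h𝒞.2.1, fun u hu => ?_, fun v hv => ?_⟩
    · rcases hu with ⟨hC, hut, _⟩ | ⟨_, hcov, _⟩
      · refine mem_univ_not_hyb h𝒞 ?_
        have := u.2.2 hut
        rwa [hC] at this
      · exact absurd (Set.eq_univ_of_univ_subset hcov.ssub.le) hcov.ssub.ne'
    · by_cases hb : v.1.2 = true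
      · obtain ⟨D, D₂, hD, -, -⟩ := v.2.2 hb
        exact absurd (Or.inr ⟨rfl, hD, ⟨fun _ => v.2.2 hb, fun _ => hb⟩⟩) (hv (tV D hD.2.1))
    -- now v.1.2 = false
      · by_cases hhyb : Hyb 𝒞 v.1.1
        · have hE : CE 𝒞 ⟨(v.1.1, true), v.2.1, fun _ => hhyb⟩ v := by
            left; exact ⟨rfl, rfl, by simpa using hb⟩
          exact absurd hE (hv _)
        · by_cases huniv : v.1.1 = Set.univ
          · exact CV.ext huniv (by simp at hb; exact hb)
          · obtain ⟨D, hD⟩ := exists_cov_above h𝒞 v.2.1 huniv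
            have hE : CE 𝒞 (tV D hD.2.1) v := by
              right
              exact ⟨rfl, hD, ⟨fun h => absurd h (by simpa using hb), fun h => (hhyb h).elim⟩⟩
            exact absurd hE (hv _)
  leaf_iff := by
    intro v
    constructor
    · intro hv
      by_cases hb : v.1.2 = true
      · exact absurd (Or.inl ⟨rfl, hb, rfl⟩ : CE 𝒞 v (tV v.1.1 v.2.1)) (hv _)
      · have hne : v.1.1 ≠ ∅ := fun h => h𝒞.1 (h ▸ v.2.1)
        obtain ⟨x, hx⟩ := Set.nonempty_iff_ne_empty.mpr hne
        by_cases hsing : v.1.1 = {x}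
        · exact ⟨x, (CV.ext (by simp [hsing]) (by simpa using hb)).symm⟩
        · have hss : ({x} : Set X) ⊂ v.1.1 :=
            (Set.singleton_subset_iff.mpr hx).ssubset_of_ne (Ne.symm hsing)
          obtain ⟨D, hcov, -⟩ := exists_cov_below h𝒞 v.2.1 (h𝒞.2.2 x) hss
          by_cases hh : Hyb 𝒞 D
          · exact absurd (Or.inr ⟨by simpa using hb, hcov, ⟨fun _ => hh, fun _ => rfl⟩⟩ :
              CE 𝒞 v ⟨(D, true), hcov.1, fun _ => hh⟩) (hv _)
          · exact absurd (Or.inr ⟨by simpa using hb, hcov,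
              ⟨fun h => (Bool.false_ne_true h).elim, fun h => (hh h).elim⟩⟩ :
              CE 𝒞 v (tV D hcov.1)) (hv _)
    · rintro ⟨x, rfl⟩ w hw
      rcases hw with ⟨-, h, -⟩ | ⟨-, hcov, -⟩
      · exact Bool.false_ne_true h
      · have := hcov.ssub
        rcases Set.subset_singleton_iff_eq.mp this.le with h | h
        · exact h𝒞.1 (h ▸ hcov.1)
        · exact this.ne h

variable (h𝒞 : IsClusteringSystem 𝒞)

lemma canonN_reach (u v : CV 𝒞) : (canonN 𝒞 h𝒞).reach u v ↔ Below u v :=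
  reach_iff h𝒞 u v

lemma canonN_cluster (v : CV 𝒞) : (canonN 𝒞 h𝒞).cluster v = v.1.1 := by
  ext x
  have hleaf : ((canonN 𝒞 h𝒞).leafEmb x).1.1 = ({x} : Set X) := rfl
  constructor
  · intro hx
    rcases (canonN_reach h𝒞 v _).mp hx with h | h | h
    · rw [← h] at hleaf; rw [hleaf]; exact rfl
    · exact (hleaf ▸ h).le (rfl : x ∈ ({x} : Set X))
    · exact (hleaf ▸ h.1) ▸ (rfl : x ∈ ({x} : Set X))
  · intro hx
    apply (canonN_reach h𝒞 v _).mpr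
    rcases eq_or_ne v.1.1 {x} with hEq | hne
    · by_cases hb : v.1.2 = true
      · exact Or.inr (Or.inr ⟨by rw [hleaf, hEq], hb, rfl⟩)
      · exact Or.inl (CV.ext (by rw [hleaf, hEq]) (by simp at hb; exact hb))
    · exact Or.inr (Or.inl (by
        rw [hleaf]
        exact (Set.singleton_subset_iff.mpr hx).ssubset_of_ne (fun h => hne h.symm)))

lemma canonN_CS : (canonN 𝒞 h𝒞).CS = 𝒞 := by
  ext C
  constructor
  · rintro ⟨v, rfl⟩; erw [canonN_cluster]; exact v.2.1
  · intro hC; exact ⟨tV C hC, by rw [canonN_cluster]; rfl⟩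

lemma canonN_E : (canonN 𝒞 h𝒞).E = CE 𝒞 := rfl

lemma canonN_hybrid (v : CV 𝒞) : (canonN 𝒞 h𝒞).IsHybrid v ↔ v.1.2 = true := by
  constructor
  · intro hh
    by_contra hb
    have hbf : v.1.2 = false := by simpa using hb
    have hsub : {u : CV 𝒞 | (canonN 𝒞 h𝒞).E u v}.ncard ≤ 1 := by
      rw [Set.ncard_le_one_iff (Set.toFinite _)]
      intro a b ha hb'
      by_cases hhyb : Hyb 𝒞 v.1.1
      · -- then both parents are (v.1.1, true)
        have key : ∀ w : CV 𝒞, (canonN 𝒞 h𝒞).E w v → w = (⟨(v.1.1, true), v.2.1, fun _ => hhyb⟩ : CV 𝒞) := by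
          intro w hw
          rcases hw with ⟨hC, hwt, -⟩ | ⟨-, -, hiff⟩
          · exact CV.ext hC hwt
          · rw [hbf] at hiff
            exact absurd (hiff.mpr hhyb) (by simp)
        rw [key a ha, key b hb']
      · -- both parents are tree vertices over covers, and covers are unique
        have key : ∀ w : CV 𝒞, (canonN 𝒞 h𝒞).E w v → w.1.2 = false ∧ Cov 𝒞 v.1.1 w.1.1 := by
          intro w hw
          rcases hw with ⟨hC, hwt, -⟩ | ⟨hwf, hcov, -⟩
          · exact absurd (by rw [← hC]; exact w.2.2 hwt) hhyb
          · exact ⟨hwf, hcov⟩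
        obtain ⟨haf, hacov⟩ := key a ha
        obtain ⟨hbf', hbcov⟩ := key b hb'
        have : a.1.1 = b.1.1 := by
          by_contra hne
          exact hhyb ⟨a.1.1, b.1.1, hacov, hbcov, hne⟩
        exact CV.ext this (haf.trans hbf'.symm)
    exact absurd hsub (not_le.mpr hh)
  · intro hb
    obtain ⟨D₁, D₂, h₁, h₂, hne⟩ := v.2.2 hb
    have e₁ : (canonN 𝒞 h𝒞).E (tV D₁ h₁.2.1) v := Or.inr ⟨rfl, h₁, ⟨fun _ => v.2.2 hb, fun _ => hb⟩⟩
    have e₂ : (canonN 𝒞 h𝒞).E (tV D₂ h₂.2.1) v := Or.inr ⟨rfl, h₂, ⟨fun _ => v.2.2 hb, fun _ => hb⟩⟩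
    refine lt_of_lt_of_le ?_ le_rfl
    rw [show (1 : ℕ) < (canonN 𝒞 h𝒞).inDeg v ↔ _ from Set.one_lt_ncard (Set.toFinite _)]
    exact ⟨tV D₁ h₁.2.1, e₁, tV D₂ h₂.2.1, e₂, fun h => hne (congrArg (fun w : CV 𝒞 => w.1.1) h)⟩

lemma canonN_clusterNetwork : (canonN 𝒞 h𝒞).ClusterNetwork := by
  refine ⟨?_, ?_, ?_, ?_⟩
  · -- PCC
    intro u v
    rw [show (canonN 𝒞 h𝒞).reach u v ↔ _ from canonN_reach h𝒞 u v,
      show (canonN 𝒞 h𝒞).reach v u ↔ _ from canonN_reach h𝒞 v u]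
    erw [canonN_cluster, canonN_cluster]
    constructor
    · rintro (h | h)
      · rcases h with rfl | h | h
        · exact Or.inl le_rfl
        · exact Or.inr h.le
        · exact Or.inr h.1.le
      · rcases h with rfl | h | h
        · exact Or.inl le_rfl
        · exact Or.inl h.le
        · exact Or.inl h.1.le
    · rintro (h | h)
      · rcases eq_or_ne u.1.1 v.1.1 with hEq | hne
        · match hu : u.1.2, hv : v.1.2 with
          | false, false => exact Or.inl (Or.inl (CV.ext hEq (hu.trans hv.symm)))
          | true, true => exact Or.inl (Or.inl (CV.ext hEq (hu.trans hv.symm)))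
          | true, false => exact Or.inl (Or.inr (Or.inr ⟨hEq.symm, hu, hv⟩))
          | false, true => exact Or.inr (Or.inr (Or.inr ⟨hEq, hv, hu⟩))
        · exact Or.inr (Or.inr (Or.inl (h.ssubset_of_ne hne)))
      · rcases eq_or_ne v.1.1 u.1.1 with hEq | hne
        · match hu : u.1.2, hv : v.1.2 with
          | false, false => exact Or.inl (Or.inl (CV.ext hEq.symm (hu.trans hv.symm)))
          | true, true => exact Or.inl (Or.inl (CV.ext hEq.symm (hu.trans hv.symm)))
          | true, false => exact Or.inl (Or.inr (Or.inr ⟨hEq, hu, hv⟩))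
          | false, true => exact Or.inr (Or.inr (Or.inr ⟨hEq.symm, hv, hu⟩))
        · exact Or.inl (Or.inr (Or.inl (h.ssubset_of_ne hne)))
  · -- (ii)
    intro u v
    erw [canonN_cluster, canonN_cluster]
    constructor
    · intro hEq
      match hu : u.1.2, hv : v.1.2 with
      | false, false => exact Or.inl (CV.ext hEq (hu.trans hv.symm))
      | true, true => exact Or.inl (CV.ext hEq (hu.trans hv.symm))
      | true, false =>
        exact Or.inr (Or.inr ⟨(canonN_hybrid h𝒞 u).mpr hu, Or.inl ⟨hEq, hu, hv⟩⟩)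
      | false, true =>
        exact Or.inr (Or.inl ⟨(canonN_hybrid h𝒞 v).mpr hv, Or.inl ⟨hEq.symm, hv, hu⟩⟩)
    · rintro (rfl | ⟨hh, he⟩ | ⟨hh, he⟩)
      · rfl
      · rcases he with ⟨hC, -, -⟩ | ⟨hvf, -, -⟩
        · exact hC.symm
        · exact absurd ((canonN_hybrid h𝒞 v).mp hh) (by simp [hvf])
      · rcases he with ⟨hC, -, -⟩ | ⟨huf, -, -⟩
        · exact hC
        · exact absurd ((canonN_hybrid h𝒞 u).mp hh) (by simp [huf])
  · -- (iii)
    rintro u v hvu ⟨w, hw1, hw2⟩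
    erw [canonN_cluster, canonN_cluster] at hw1 hw2
    rcases hvu with ⟨hC, -, -⟩ | ⟨-, hcov, -⟩
    · exact absurd (hw1.trans hw2) (by rw [hC]; exact fun h => h.ne rfl)
    · exact hcov.2.2.2 w.1.1 w.2.1 hw1 hw2
  · -- (iv)
    intro v hv
    have hb := (canonN_hybrid h𝒞 v).mp hv
    refine ⟨tV v.1.1 v.2.1, Or.inl ⟨rfl, hb, rfl⟩, ?_, ?_⟩
    · intro w hw
      rcases hw with ⟨hC, -, hwf⟩ | ⟨hvf, -, -⟩
      · exact CV.ext hC.symm hwf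
      · exact absurd hb (by simp [hvf])
    · have : ¬ (canonN 𝒞 h𝒞).IsHybrid (tV v.1.1 v.2.1) := by
        rw [canonN_hybrid]
        simp [tV]
      exact not_lt.mp this

end Canon

-- ===== general lemmas about networks =====
namespace Network
variable (N : Network X)

lemma reach_cluster_subset {u v : N.V} (h : N.reach u v) : N.cluster v ⊆ N.cluster u :=
  fun _ hx => Relation.ReflTransGen.trans h hx

lemma edge_cluster_subset {u v : N.V} (h : N.E u v) : N.cluster v ⊆ N.cluster u :=
  N.reach_cluster_subset (Relation.ReflTransGen.single h)

lemma leaf_no_out (x : X) : ∀ w, ¬ N.E (N.leafEmb x) w :=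
  (N.leaf_iff _).mpr ⟨x, rfl⟩

lemma cluster_leafEmb (x : X) : N.cluster (N.leafEmb x) = {x} := by
  ext y
  constructor
  · intro hy
    rcases Relation.ReflTransGen.cases_head hy with heq | ⟨c, hc, -⟩
    · exact Set.mem_singleton_iff.mpr (N.leafEmb_inj heq).symm
    · exact absurd hc (N.leaf_no_out x c)
  · rintro rfl
    exact Relation.ReflTransGen.refl

lemma E_ne {u v : N.V} (h : N.E u v) : u ≠ v :=
  fun heq => N.acyclic u v h (heq ▸ Relation.ReflTransGen.refl)

lemma tree_not_hyb {u : N.V} (h : N.IsTreeVertex u) : ¬ N.IsHybrid u :=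
  fun hh => absurd h (not_le.mpr hh)

lemma hybrid_pair {v : N.V} (h : N.IsHybrid v) : ∃ p q, N.E p v ∧ N.E q v ∧ p ≠ q := by
  obtain ⟨p, hp, q, hq, hpq⟩ := (Set.one_lt_ncard (Set.toFinite _)).mp h
  exact ⟨p, q, hp, hq, hpq⟩

lemma parents_eq {v : N.V} (h : ¬ N.IsHybrid v) {p q : N.V} (hp : N.E p v) (hq : N.E q v) :
    p = q :=
  (Set.ncard_le_one_iff (Set.toFinite _)).mp (not_lt.mp h) hp hq

lemma unique_child_cluster {v u : N.V} (he : N.E v u) (hu : ∀ w, N.E v w → w = u) :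
    N.cluster v = N.cluster u := by
  apply Set.Subset.antisymm
  · intro x hx
    rcases Relation.ReflTransGen.cases_head hx with heq | ⟨c, hc, hcr⟩
    · exact absurd (heq ▸ he) (N.leaf_no_out x u)
    · exact (hu c hc) ▸ hcr
  · exact N.edge_cluster_subset he

end Network

-- ===== isomorphism with the canonical network =====
section Iso
variable [Fintype X] {𝒞 : Set (Set X)}

theorem clusterNetwork_iso (h𝒞 : IsClusteringSystem 𝒞) (N' : Network X)
    (hCN : N'.ClusterNetwork) (hCS : N'.CS = 𝒞) : (canonN 𝒞 h𝒞).Isomorphic N' := by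
  classical
  obtain ⟨hPCC, hII, hIII, hIV⟩ := hCN
  have mem𝒞 : ∀ v, N'.cluster v ∈ 𝒞 := fun v => by rw [← hCS]; exact ⟨v, rfl⟩
  have surj𝒞 : ∀ C ∈ 𝒞, ∃ v, N'.cluster v = C := fun C hC => by
    rw [← hCS] at hC; exact hC
  have edge_eq_hyb : ∀ {u v}, N'.E u v → N'.cluster u = N'.cluster v →
      N'.IsHybrid u ∧ ¬ N'.IsHybrid v ∧ ∀ w, N'.E u w → w = v := by
    intro u v he heq
    rcases (hII u v).mp heq with rfl | ⟨_, hvu⟩ | ⟨hu, _⟩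
    · exact absurd rfl (N'.E_ne he)
    · exact absurd (Relation.ReflTransGen.single he) (N'.acyclic v u hvu)
    · obtain ⟨u₀, he₀, huniq, htree⟩ := hIV u hu
      obtain rfl : v = u₀ := huniq v he
      exact ⟨hu, N'.tree_not_hyb htree, huniq⟩
  have edge_cov : ∀ {u v}, N'.E u v → N'.cluster v ≠ N'.cluster u →
      Cov 𝒞 (N'.cluster v) (N'.cluster u) := by
    intro u v he hne
    refine ⟨mem𝒞 v, mem𝒞 u, (N'.edge_cluster_subset he).ssubset_of_ne hne, ?_⟩
    intro F hF h1 h2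
    obtain ⟨w, rfl⟩ := surj𝒞 F hF
    exact hIII v u he ⟨w, h1, h2⟩
  have hybrid_not_proper : ∀ {u v}, N'.E u v → N'.IsHybrid u →
      N'.cluster u = N'.cluster v := by
    intro u v he hu
    obtain ⟨u₀, he₀, huniq, -⟩ := hIV u hu
    obtain rfl : v = u₀ := huniq v he
    exact N'.unique_child_cluster he₀ huniq
  have lemA : ∀ {h}, N'.IsHybrid h → Hyb 𝒞 (N'.cluster h) := by
    intro h hh
    obtain ⟨p, q, hp, hq, hpq⟩ := N'.hybrid_pair hh
    have hne : ∀ {p'}, N'.E p' h → N'.cluster h ≠ N'.cluster p' := by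
      intro p' hp' heq
      exact (edge_eq_hyb hp' heq.symm).2.1 hh
    have hdist : N'.cluster p ≠ N'.cluster q := by
      intro heq
      rcases (hII p q).mp heq with rfl | ⟨hq', hqp⟩ | ⟨hp', hpq'⟩
      · exact hpq rfl
      · obtain ⟨q₀, -, huniq, -⟩ := hIV q hq'
        exact N'.E_ne hp (((huniq p hqp).trans (huniq h hq).symm))
      · obtain ⟨p₀, -, huniq, -⟩ := hIV p hp'
        exact N'.E_ne hq (((huniq q hpq').trans (huniq h hp).symm))
    exact ⟨N'.cluster p, N'.cluster q, edge_cov hp (hne hp), edge_cov hq (hne hq), hdist⟩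
  have tree_rep : ∀ C ∈ 𝒞, ∃ t, N'.cluster t = C ∧ ¬ N'.IsHybrid t := by
    intro C hC
    obtain ⟨v, rfl⟩ := surj𝒞 C hC
    by_cases hv : N'.IsHybrid v
    · obtain ⟨u, he, huniq, htree⟩ := hIV v hv
      exact ⟨u, (N'.unique_child_cluster he huniq).symm, N'.tree_not_hyb htree⟩
    · exact ⟨v, rfl, hv⟩
  have lemB : ∀ C ∈ 𝒞, Hyb 𝒞 C → ∃ h, N'.IsHybrid h ∧ N'.cluster h = C := by
    rintro C hC ⟨D₁, D₂, h₁, h₂, hD⟩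
    obtain ⟨t, htC, htt⟩ := tree_rep C hC
    have par : ∀ D, Cov 𝒞 C D → ∃ p, N'.E p t ∧ (N'.cluster p = C ∨ N'.cluster p = D) := by
      intro D hD'
      obtain ⟨v, hv⟩ := surj𝒞 D hD'.2.1
      have hsub : N'.cluster t ⊆ N'.cluster v := by rw [htC, hv]; exact hD'.ssub.le
      have hreach : N'.reach v t := by
        rcases (hPCC v t).mpr (Or.inr hsub) with h | h
        · exact h
        · exact absurd (by rw [← hv, ← htC]; exact N'.reach_cluster_subset h)
            hD'.ssub.not_subset
      rcases Relation.ReflTransGen.cases_tail hreach with heq | ⟨p, hvp, hpt⟩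
      · exact absurd (by rw [← htC, ← hv, heq]) hD'.ssub.ne
      · have hb1 : C ⊆ N'.cluster p := htC ▸ N'.edge_cluster_subset hpt
        have hb2 : N'.cluster p ⊆ D := hv ▸ N'.reach_cluster_subset hvp
        rcases eq_or_ne (N'.cluster p) C with h | h
        · exact ⟨p, hpt, Or.inl h⟩
        · exact ⟨p, hpt, Or.inr (hD'.sandwich (mem𝒞 p) (hb1.ssubset_of_ne (Ne.symm h)) hb2)⟩
    obtain ⟨p₁, hp₁, hc₁⟩ := par D₁ h₁
    obtain ⟨p₂, hp₂, hc₂⟩ := par D₂ h₂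
    have mk : ∀ p, N'.E p t → N'.cluster p = C → N'.IsHybrid p := by
      intro p hpt hpc
      exact (edge_eq_hyb hpt (by rw [hpc, htC])).1
    rcases hc₁ with h | hD1
    · exact ⟨p₁, mk p₁ hp₁ h, h⟩
    rcases hc₂ with h | hD2
    · exact ⟨p₂, mk p₂ hp₂ h, h⟩
    exact absurd (by rw [← hD1, ← hD2, N'.parents_eq htt hp₁ hp₂]) hD
  have notHyb : ∀ {u v}, N'.E u v → ¬ N'.IsHybrid v → N'.cluster v ≠ N'.cluster u →
      ¬ Hyb 𝒞 (N'.cluster v) := by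
    intro u v he hv hne hH
    obtain ⟨h, hh, hhc⟩ := lemB _ (mem𝒞 v) hH
    rcases (hII h v).mp hhc with rfl | ⟨hv', -⟩ | ⟨-, hhv⟩
    · exact hv hh
    · exact hv hv'
    · have : h = u := N'.parents_eq hv hhv he
      exact hne (this ▸ hhc).symm
  -- the vertex map
  have ψmem : ∀ v, (N'.cluster v, if N'.IsHybrid v then true else false).1 ∈ 𝒞 ∧
      ((N'.cluster v, if N'.IsHybrid v then true else false).2 = true →
        Hyb 𝒞 (N'.cluster v, if N'.IsHybrid v then true else false).1) := by
    intro v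
    refine ⟨mem𝒞 v, fun hb => ?_⟩
    by_cases h : N'.IsHybrid v
    · exact lemA h
    · simp [h] at hb
  set ψ : N'.V → CV 𝒞 :=
    fun v => ⟨(N'.cluster v, if N'.IsHybrid v then true else false), ψmem v⟩ with hψ
  have ψC : ∀ v, (ψ v).1.1 = N'.cluster v := fun _ => rfl
  have ψB : ∀ v, (ψ v).1.2 = if N'.IsHybrid v then true else false := fun _ => rfl
  have ψBt : ∀ v, (ψ v).1.2 = true ↔ N'.IsHybrid v := by
    intro v
    rw [ψB]
    by_cases h : N'.IsHybrid v <;> simp [h]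
  have ψBf : ∀ v, (ψ v).1.2 = false ↔ ¬ N'.IsHybrid v := by
    intro v
    rw [ψB]
    by_cases h : N'.IsHybrid v <;> simp [h]
  have ψinj : Function.Injective ψ := by
    intro a b h
    have hC : N'.cluster a = N'.cluster b := by rw [← ψC a, ← ψC b, h]
    have hBo : N'.IsHybrid a ↔ N'.IsHybrid b := by
      rw [← ψBt a, ← ψBt b, h]
    rcases (hII a b).mp hC with rfl | ⟨h1, h2⟩ | ⟨h1, h2⟩
    · rfl
    · obtain ⟨b₀, -, huniq, htree⟩ := hIV b h1
      exact absurd (hBo.mpr h1) ((huniq a h2) ▸ N'.tree_not_hyb htree)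
    · obtain ⟨a₀, -, huniq, htree⟩ := hIV a h1
      exact absurd (hBo.mp h1) ((huniq b h2) ▸ N'.tree_not_hyb htree)
  have ψsurj : Function.Surjective ψ := by
    rintro ⟨⟨C, b⟩, hC, hb⟩
    cases b with
    | false =>
      obtain ⟨t, htC, htt⟩ := tree_rep C hC
      exact ⟨t, Subtype.ext (Prod.ext (by rw [ψC, htC]) (by rw [ψB, if_neg htt]))⟩
    | true =>
      obtain ⟨h, hh, hhc⟩ := lemB C hC (hb rfl)
      exact ⟨h, Subtype.ext (Prod.ext (by rw [ψC, hhc]) (by rw [ψB, if_pos hh]))⟩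
  have ψedge : ∀ u v, N'.E u v ↔ CE 𝒞 (ψ u) (ψ v) := by
    intro u v
    constructor
    · intro he
      rcases eq_or_ne (N'.cluster v) (N'.cluster u) with heq | hne
      · obtain ⟨hu, hv, -⟩ := edge_eq_hyb he heq.symm
        exact Or.inl ⟨by rw [ψC, ψC, heq], (ψBt u).mpr hu, (ψBf v).mpr hv⟩
      · have hu : ¬ N'.IsHybrid u := fun h => hne (hybrid_not_proper he h).symm
        refine Or.inr ⟨(ψBf u).mpr hu, by rw [ψC, ψC]; exact edge_cov he hne, ?_⟩
        rw [ψBt v, ψC]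
        constructor
        · exact fun h => lemA h
        · intro hH
          by_contra hv
          exact notHyb he hv hne hH
    · rintro (⟨hC, hut, hvf⟩ | ⟨huf, hcov, hiff⟩)
      · have hhu : N'.IsHybrid u := (ψBt u).mp hut
        have hhv : ¬ N'.IsHybrid v := (ψBf v).mp hvf
        have hC' : N'.cluster u = N'.cluster v := by rw [← ψC u, ← ψC v, hC]
        rcases (hII u v).mp hC' with rfl | ⟨h1, -⟩ | ⟨-, h2⟩
        · exact absurd hhu hhv
        · exact absurd h1 hhv
        · exact h2
      · have hhu : ¬ N'.IsHybrid u := (ψBf u).mp huf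
        rw [ψC, ψC] at hcov
        rw [ψBt v, ψC] at hiff
        have hss : N'.cluster v ⊂ N'.cluster u := hcov.ssub
        have hreach : N'.reach u v := by
          rcases (hPCC u v).mpr (Or.inr hss.le) with h | h
          · exact h
          · exact absurd (N'.reach_cluster_subset h) hss.not_subset
        rcases Relation.ReflTransGen.cases_head hreach with heq | ⟨c, huc, hcv⟩
        · exact absurd (by rw [heq]) hss.ne
        · have h1 : N'.cluster v ⊆ N'.cluster c := N'.reach_cluster_subset hcv
          have h2 : N'.cluster c ⊆ N'.cluster u := N'.edge_cluster_subset huc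
          have hcc : N'.cluster c ≠ N'.cluster u := fun h => hhu (edge_eq_hyb huc h.symm).1
          have hcv' : N'.cluster c = N'.cluster v := by
            by_contra h
            exact hcov.2.2.2 (N'.cluster c) (mem𝒞 c) (h1.ssubset_of_ne (Ne.symm h))
              (h2.ssubset_of_ne hcc)
          have hbc : N'.IsHybrid c ↔ N'.IsHybrid v := by
            by_cases hH : Hyb 𝒞 (N'.cluster v)
            · have hc : N'.IsHybrid c := by
                by_contra hc0
                exact notHyb huc hc0 (hcv' ▸ hcc) (hcv' ▸ hH)
              have hv : N'.IsHybrid v := hiff.mpr hH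
              exact iff_of_true hc hv
            · have hc : ¬ N'.IsHybrid c := fun h => hH (hcv' ▸ lemA h)
              have hv : ¬ N'.IsHybrid v := fun h => hH (lemA h)
              exact iff_of_false hc hv
          have : ψ c = ψ v := by
            refine Subtype.ext (Prod.ext (by rw [ψC, ψC, hcv']) ?_)
            rw [ψB, ψB]
            by_cases h : N'.IsHybrid v
            · rw [if_pos h, if_pos (hbc.mpr h)]
            · rw [if_neg h, if_neg (fun hc => h (hbc.mp hc))]
          exact (ψinj this) ▸ huc
  have ψleaf : ∀ x, ψ (N'.leafEmb x) = (canonN 𝒞 h𝒞).leafEmb x := by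
    intro x
    have h1 : N'.cluster (N'.leafEmb x) = {x} := N'.cluster_leafEmb x
    have h2 : ¬ N'.IsHybrid (N'.leafEmb x) := by
      intro hh
      obtain ⟨u, he, -, -⟩ := hIV _ hh
      exact N'.leaf_no_out x u he
    exact Subtype.ext (Prod.ext (by rw [ψC, h1]; rfl) (by rw [ψB, if_neg h2]; rfl))
  -- assemble the isomorphism
  let e : N'.V ≃ CV 𝒞 := Equiv.ofBijective ψ ⟨ψinj, ψsurj⟩
  refine ⟨e.symm, fun u v => ?_, fun x => ?_⟩
  · have h1 : ψ (e.symm u) = u := e.apply_symm_apply u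
    have h2 : ψ (e.symm v) = v := e.apply_symm_apply v
    have h3 := (ψedge (e.symm u) (e.symm v)).symm
    rw [h1, h2] at h3
    exact h3
  · rw [← ψleaf x]
    exact e.symm_apply_apply _

end Iso

-- ===== semi-regular separated phylogenetic networks are cluster networks =====
theorem semiRegular_clusterNetwork (N : Network X) (hSR : N.SemiRegular)
    (hSep : N.Separated) (hPhy : N.Phylogenetic) : N.ClusterNetwork := by
  obtain ⟨hSF, hPCC⟩ := hSR
  have sep_child : ∀ {v}, N.IsHybrid v → ∃ u, N.E v u ∧ ∀ w, N.E v w → w = u := by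
    intro v hv
    obtain ⟨u, hu⟩ := Set.ncard_eq_one.mp (hSep v hv)
    refine ⟨u, ?_, fun w hw => ?_⟩
    · have : u ∈ {w | N.E v w} := by rw [hu]; exact rfl
      exact this
    · have : w ∈ ({u} : Set N.V) := by rw [← hu]; exact hw
      exact this
  have L1 : ∀ {a b}, N.E a b → N.cluster a = N.cluster b →
      N.IsHybrid a ∧ ∀ w, N.E a w → w = b := by
    intro a b hab heq
    have huniq : ∀ w, N.E a w → w = b := by
      intro w hw
      by_contra hne
      have hsub : N.cluster w ⊆ N.cluster b := by
        rw [← heq]; exact N.edge_cluster_subset hw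
      rcases (hPCC b w).mpr (Or.inr hsub) with h | h
      · exact hSF a w ⟨hw, b, hab, fun h' => hne (h'.symm), h⟩
      · exact hSF a b ⟨hab, w, hw, hne, h⟩
    have hout : N.outDeg a = 1 := by
      have : {w | N.E a w} = {b} := Set.eq_singleton_iff_unique_mem.mpr ⟨hab, huniq⟩
      rw [Network.outDeg, this, Set.ncard_singleton]
    have hhyb : N.IsHybrid a := by
      by_contra h
      exact hPhy ⟨a, hout, not_lt.mp h⟩
    exact ⟨hhyb, huniq⟩
  have config : ∀ {v w}, N.E v w → (∀ w', N.E v w' → w' = w) → N.IsHybrid w → False := by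
    intro v w hvw huniq hw
    obtain ⟨p₁, q, hp₁, hq, hpq⟩ := N.hybrid_pair hw
    have hex : ∃ p', N.E p' w ∧ p' ≠ v := by
      rcases eq_or_ne p₁ v with rfl | h
      · exact ⟨q, hq, fun hh => hpq hh.symm⟩
      · exact ⟨p₁, hp₁, h⟩
    obtain ⟨p, hpw, hpv⟩ := hex
    have hclvw : N.cluster v = N.cluster w := N.unique_child_cluster hvw huniq
    have hsub : N.cluster v ⊆ N.cluster p := by
      rw [hclvw]; exact N.edge_cluster_subset hpw
    rcases (hPCC p v).mpr (Or.inr hsub) with h | h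
    · rcases Relation.ReflTransGen.cases_head h with heq | ⟨c, hpc, hcv⟩
      · exact hpv heq
      · have hcw : N.reach c w := hcv.tail hvw
        have hcnew : c ≠ w := fun hcw' => N.acyclic v w hvw (hcw' ▸ hcv)
        exact hSF p w ⟨hpw, c, hpc, hcnew, hcw⟩
    · rcases Relation.ReflTransGen.cases_head h with heq | ⟨c, hvc, hcp⟩
      · exact hpv heq.symm
      · have hcweq : c = w := huniq c hvc
        exact N.acyclic p w hpw (hcweq ▸ hcp)
  have key : ∀ {v u}, N.reach v u → N.cluster v = N.cluster u → v ≠ u →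
      N.IsHybrid v ∧ N.E v u := by
    intro v u hr heq hne
    rcases Relation.ReflTransGen.cases_head hr with h | ⟨w, hvw, hwu⟩
    · exact absurd h hne
    · have hcw : N.cluster v = N.cluster w := by
        have h1 : N.cluster u ⊆ N.cluster w := N.reach_cluster_subset hwu
        have h2 : N.cluster w ⊆ N.cluster v := N.edge_cluster_subset hvw
        exact Set.Subset.antisymm (heq.le.trans h1) h2
      obtain ⟨hhv, huniq⟩ := L1 hvw hcw
      rcases eq_or_ne w u with rfl | hwu'
      · exact ⟨hhv, hvw⟩
      · exfalso
        rcases Relation.ReflTransGen.cases_head hwu with h | ⟨w₂, hww₂, hw₂u⟩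
        · exact hwu' h
        · have hcw2 : N.cluster w = N.cluster w₂ := by
            have h1 : N.cluster u ⊆ N.cluster w₂ := N.reach_cluster_subset hw₂u
            have h2 : N.cluster w₂ ⊆ N.cluster w := N.edge_cluster_subset hww₂
            exact Set.Subset.antisymm ((hcw.symm.trans heq).le.trans h1) h2
          exact config hvw huniq (L1 hww₂ hcw2).1
  refine ⟨hPCC, ?_, ?_, ?_⟩
  · intro u v
    constructor
    · intro heq
      rcases eq_or_ne u v with rfl | hne
      · exact Or.inl rfl
      · rcases (hPCC u v).mpr (Or.inl heq.le) with h | h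
        · exact Or.inr (Or.inr (key h heq hne))
        · exact Or.inr (Or.inl (key h heq.symm (Ne.symm hne)))
    · rintro (rfl | ⟨hv, he⟩ | ⟨hu, he⟩)
      · rfl
      · obtain ⟨u₀, hu₀, huniq⟩ := sep_child hv
        obtain rfl : u = u₀ := huniq u he
        exact (N.unique_child_cluster hu₀ huniq).symm
      · obtain ⟨v₀, hv₀, huniq⟩ := sep_child hu
        obtain rfl : v = v₀ := huniq v he
        exact N.unique_child_cluster hv₀ huniq
  · rintro u v hvu ⟨w, hw1, hw2⟩
    have hr_vw : N.reach v w := by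
      rcases (hPCC v w).mpr (Or.inr hw2.le) with h | h
      · exact h
      · exact absurd (N.reach_cluster_subset h) hw2.not_subset
    have hr_wu : N.reach w u := by
      rcases (hPCC w u).mpr (Or.inr hw1.le) with h | h
      · exact h
      · exact absurd (N.reach_cluster_subset h) hw1.not_subset
    rcases Relation.ReflTransGen.cases_head hr_vw with heq | ⟨c, hvc, hcw⟩
    · exact (heq ▸ hw2).ne rfl
    · have hcu : c ≠ u := by
        rintro rfl
        exact hw1.not_subset (N.reach_cluster_subset hcw)
      exact hSF v u ⟨hvu, c, hvc, hcu, hcw.trans hr_wu⟩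
  · intro v hv
    obtain ⟨u, he, huniq⟩ := sep_child hv
    refine ⟨u, he, huniq, ?_⟩
    by_contra htree
    exact config he huniq (not_le.mp htree)


/-- For every clustering system there is a cluster network with
this clustering system, unique up to a digraph isomorphism fixing all leaves;
equivalently, it is the unique semi-regular, separated, phylogenetic network
with this clustering system. -/
theorem exists_unique_clusterNetwork (X : Type) [Fintype X] (𝒞 : Set (Set X))
    (h𝒞 : IsClusteringSystem 𝒞) :
    ∃ N : Network X, N.ClusterNetwork ∧ N.CS = 𝒞 ∧
      (∀ N' : Network X, N'.ClusterNetwork → N'.CS = 𝒞 → N.Isomorphic N') ∧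
      (∀ N' : Network X, N'.SemiRegular → N'.Separated → N'.Phylogenetic →
        N'.CS = 𝒞 → N.Isomorphic N') := by
  refine ⟨canonN 𝒞 h𝒞, canonN_clusterNetwork h𝒞, canonN_CS h𝒞,
    fun N' hCN hCS => clusterNetwork_iso h𝒞 N' hCN hCS,
    fun N' hSR hSep hPhy hCS =>
      clusterNetwork_iso h𝒞 N' (semiRegular_clusterNetwork N' hSR hSep hPhy) hCS⟩

end PhyloNet
end

section
/- Let N be a tree-child network and let u, v be ⪯_N-incomparable vertices of N. Then either C(u) ∩ C(v) = C(h) for some hybrid vertex h of N, or C(u) ∩ C(v) ∉ 𝒞_N. -/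
namespace PhyloNet

variable {X : Type}

section Aux

variable {X : Type}

/-- The "parent" relation `fun a b => E a b` (a is a parent of b) is well-founded. -/
lemma wf_up (N : Network X) : WellFounded (fun a b : N.V => N.E a b) := by
  haveI : IsTrans N.V (Relation.TransGen N.E) := ⟨fun _ _ _ h h' => h.trans h'⟩
  haveI : IsIrrefl N.V (Relation.TransGen N.E) := ⟨by
    intro a ha
    obtain ⟨b, hab, hba⟩ := (Relation.TransGen.head'_iff).mp ha
    exact N.acyclic a b hab hba⟩
  exact Subrelation.wf (fun h => Relation.TransGen.single h)
    (Finite.wellFounded_of_trans_of_irrefl (Relation.TransGen N.E))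

/-- The "child" relation `fun a b => E b a` (a is a child of b) is well-founded. -/
lemma wf_down (N : Network X) : WellFounded (fun a b : N.V => N.E b a) := by
  haveI : IsTrans N.V (Relation.TransGen (Function.swap N.E)) :=
    ⟨fun _ _ _ h h' => h.trans h'⟩
  haveI : IsIrrefl N.V (Relation.TransGen (Function.swap N.E)) := ⟨by
    intro a ha
    obtain ⟨b, hab, hba⟩ := (Relation.TransGen.head'_iff).mp ha
    exact N.acyclic b a hab ((Relation.reflTransGen_swap).mp hba)⟩
  have hwf : WellFounded (Relation.TransGen (Function.swap N.E)) :=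
    Finite.wellFounded_of_trans_of_irrefl _
  exact Subrelation.wf
    (fun {a b} h => Relation.TransGen.single (show Function.swap N.E a b from h)) hwf

/-- Tree-path lemma: from any vertex `w` of a tree-child network there is a leaf `x`
below `w` such that every ancestor `z` of `x` either reaches `w`, or is reached from
`w` and is comparable with every ancestor of `x`. -/
lemma treePath (N : Network X) (hTC : N.TreeChild) (w : N.V) :
    ∃ x : X, N.reach w (N.leafEmb x) ∧
      ∀ z : N.V, N.reach z (N.leafEmb x) →
        N.reach z w ∨ (N.reach w z ∧ ∀ y : N.V, N.reach y (N.leafEmb x) →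
          N.reach y z ∨ N.reach z y) := by
  induction w using (wf_down N).induction with
  | _ w ih =>
    by_cases hleaf : N.IsLeaf w
    · obtain ⟨x, hx⟩ := (N.leaf_iff w).mp hleaf
      refine ⟨x, hx ▸ Relation.ReflTransGen.refl, fun z hz => Or.inl (hx ▸ hz)⟩
    · obtain ⟨c, hwc, hdeg⟩ := hTC w hleaf
      obtain ⟨x, hx1, hx2⟩ := ih c hwc
      refine ⟨x, Relation.ReflTransGen.head hwc hx1, ?_⟩
      intro z hz
      rcases hx2 z hz with hzc | ⟨hcz, hchain⟩
      · rcases hzc.cases_tail with hcez | ⟨p, hzp, hpc⟩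
        · -- here c = z
          subst hcez
          refine Or.inr ⟨Relation.ReflTransGen.single hwc, fun y hy => ?_⟩
          rcases hx2 y hy with h | h
          · exact Or.inl h
          · exact Or.inr h.1
        · -- last edge into c; since inDeg c = 1, p = w
          have hpw : p = w := by
            obtain ⟨a, ha⟩ := Set.ncard_eq_one.mp hdeg
            have h1 : p ∈ {q | N.E q c} := hpc
            have h2 : w ∈ {q | N.E q c} := hwc
            rw [ha] at h1 h2
            exact h1.trans h2.symm
          exact Or.inl (hpw ▸ hzp)
      · exact Or.inr ⟨Relation.ReflTransGen.head hwc hcz, hchain⟩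

end Aux

/-- In a tree-child network, the intersection of the clusters of
two incomparable vertices is either the cluster of a hybrid vertex or not a
cluster of the network at all. -/
theorem treeChild_incomparable_intersection (X : Type) [Fintype X]
    (N : Network X) (hTC : N.TreeChild) (u v : N.V)
    (h₁ : ¬ N.reach u v) (h₂ : ¬ N.reach v u) :
    (∃ h : N.V, N.IsHybrid h ∧ N.cluster u ∩ N.cluster v = N.cluster h) ∨
      N.cluster u ∩ N.cluster v ∉ N.CS := by
  by_cases hCS : N.cluster u ∩ N.cluster v ∈ N.CS
  · left
    obtain ⟨w, hw⟩ := hCS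
    have hmono : ∀ a b : N.V, N.reach a b → N.cluster b ⊆ N.cluster a :=
      fun a b hab x hx => hab.trans hx
    revert hw
    induction w using (wf_up N).induction with
    | _ w ih =>
      intro hw
      by_cases hhyb : N.IsHybrid w
      · exact ⟨w, hhyb, hw.symm⟩
      obtain ⟨x, hx1, hx2⟩ := treePath N hTC w
      have hxw : x ∈ N.cluster w := hx1
      have hxuv : x ∈ N.cluster u ∩ N.cluster v := hw ▸ hxw
      have hxu : N.reach u (N.leafEmb x) := hxuv.1
      have hxv : N.reach v (N.leafEmb x) := hxuv.2
      have hu : N.reach u w := by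
        rcases hx2 u hxu with h | ⟨_, hchain⟩
        · exact h
        · rcases hchain v hxv with h | h
          · exact absurd h h₂
          · exact absurd h h₁
      have hv : N.reach v w := by
        rcases hx2 v hxv with h | ⟨_, hchain⟩
        · exact h
        · rcases hchain u hxu with h | h
          · exact absurd h h₁
          · exact absurd h h₂
      have hne_u : u ≠ w := fun e => h₂ (e ▸ hv)
      have hne_v : v ≠ w := fun e => h₁ (e ▸ hu)
      obtain hwu | ⟨p, hup, hpw⟩ := hu.cases_tail
      · exact absurd hwu.symm hne_u
      obtain hwv | ⟨q, hvq, hqw⟩ := hv.cases_tail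
      · exact absurd hwv.symm hne_v
      have hdeg : {a | N.E a w}.ncard ≤ 1 := not_lt.mp hhyb
      have hpq : p = q :=
        (Set.ncard_le_one (Set.toFinite _)).mp hdeg p hpw q hqw
      have hclp : N.cluster p = N.cluster u ∩ N.cluster v := by
        apply Set.Subset.antisymm
        · exact Set.subset_inter (hmono _ _ hup) (hpq ▸ hmono _ _ hvq)
        · rw [← hw]
          exact hmono _ _ (Relation.ReflTransGen.single hpw)
      exact ih p hpw hclp
  · exact Or.inr hCS

end PhyloNet
end
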